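/- Given monoids N and H, an admissible H-indexed equivalence relation E on N (written n ∼^h n'), and a compatible action α : H × N → N, the set ⨆_{h∈H} N/∼^h with unit ([1],1) and product ([n],h)·([n'],h') = ([n·α(h,n')], h·h') is a monoid. -/
import Mathlib


/-- An admissible H-indexed equivalence relation E on N: for each h an equivalence
relation ∼^h on N such that ∼^1 is equality, left multiplication preserves ∼^h, and
n ∼^h n' implies n ∼^{h·y} n'. -/
structure IndexedEqv (H N : Type*) [Monoid H] [Monoid N] where
  r : H → N → N → Prop
  iseqv : ∀ h, Equivalence (r h)
  one_eq : ∀ {n n' : N}, r 1 n n' → n = n'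
  mul_left : ∀ (x : N) {h : H} {n n' : N}, r h n n' → r h (x * n) (x * n')
  mul_right : ∀ (y : H) {h : H} {n n' : N}, r h n n' → r (h * y) n n'

def IndexedEqv.setoid {H N : Type*} [Monoid H] [Monoid N] (E : IndexedEqv H N) (h : H) :
    Setoid N := ⟨E.r h, E.iseqv h⟩

/-- α : H × N → N is a compatible action for the admissible indexed equivalence relation E. -/
structure CompatibleAction {H N : Type*} [Monoid H] [Monoid N] (E : IndexedEqv H N)
    (α : H → N → N) : Prop where
  c1 : ∀ (h : H) (n n' x : N), E.r h n n' → E.r h (n * α h x) (n' * α h x)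
  c2 : ∀ (h : H) (n n' : N) (x : H), E.r h n n' → E.r (x * h) (α x n) (α x n')
  c3 : ∀ (h : H) (n n' : N), E.r h (α h (n * n')) (α h n * α h n')
  c4 : ∀ (h h' : H) (n : N), E.r (h * h') (α (h * h') n) (α h (α h' n))
  c5 : ∀ h : H, E.r h (α h 1) 1
  c6 : ∀ n : N, E.r 1 (α 1 n) n

/-- The carrier ⨆_{h ∈ H} N/∼^h of the weak semidirect product. -/
def WProd {H N : Type*} [Monoid H] [Monoid N] (E : IndexedEqv H N) : Type _ :=
  (h : H) × Quotient (E.setoid h)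

/-- The element ([n], h). -/
def wmk {H N : Type*} [Monoid H] [Monoid N] (E : IndexedEqv H N) (h : H) (n : N) : WProd E :=
  ⟨h, Quotient.mk (E.setoid h) n⟩

/-- The multiplication ([n],h)·([n'],h') = ([n·α(h,n')], h·h') of the weak semidirect
product N ⋊_{E,α} H. -/
def wmul {H N : Type*} [Monoid H] [Monoid N] (E : IndexedEqv H N) {α : H → N → N}
    (hα : CompatibleAction E α) : WProd E → WProd E → WProd E :=
  fun x y =>
    ⟨x.1 * y.1,
      Quotient.liftOn₂ x.2 y.2
        (fun n n' => Quotient.mk (E.setoid (x.1 * y.1)) (n * α x.1 n'))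
        (fun a c b d hab hcd =>
          Quotient.sound
            ((E.iseqv (x.1 * y.1)).trans
              (E.mul_right y.1 (hα.c1 x.1 a b c hab))
              (E.mul_left b (hα.c2 y.1 c d x.1 hcd))))⟩

/-- Given monoids N and H, an admissible H-indexed equivalence relation E and a
compatible action α, the set ⨆_{h∈H} N/∼^h is a monoid with unit ([1],1) and product
([n],h)·([n'],h') = ([n·α(h,n')], h·h'). -/

lemma wmk_eq {H N : Type*} [Monoid H] [Monoid N] (E : IndexedEqv H N) {h h' : H}
    {n n' : N} (hh : h = h') (hr : E.r h n n') : wmk E h n = wmk E h' n' := by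
  subst hh
  exact congrArg (fun q => (⟨h, q⟩ : WProd E)) (Quotient.sound (s := E.setoid h) hr)

theorem wprod_monoid {H N : Type*} [Monoid H] [Monoid N] (E : IndexedEqv H N)
    (α : H → N → N) (hα : CompatibleAction E α) :
    ∃ M : Monoid (WProd E),
      M.one = wmk E 1 1 ∧
      ∀ (h h' : H) (n n' : N),
        M.mul (wmk E h n) (wmk E h' n') = wmk E (h * h') (n * α h n') := by
  letI : Mul (WProd E) := ⟨wmul E hα⟩
  letI : One (WProd E) := ⟨wmk E 1 1⟩
  refine ⟨{ mul := wmul E hα, one := wmk E 1 1,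
            mul_assoc := ?_, one_mul := ?_, mul_one := ?_,
            npow := npowRec, npow_zero := fun _ => rfl, npow_succ := fun _ _ => rfl },
          rfl, fun h h' n n' => rfl⟩
  · rintro ⟨h, a⟩ ⟨h', b⟩ ⟨h'', c⟩
    induction a using Quotient.ind with | _ n => ?_
    induction b using Quotient.ind with | _ n' => ?_
    induction c using Quotient.ind with | _ n'' => ?_
    show wmk E ((h * h') * h'') ((n * α h n') * α (h * h') n'')
        = wmk E (h * (h' * h'')) (n * α h (n' * α h' n''))
    refine wmk_eq E (mul_assoc h h' h'') ?_
    have e1 : E.r ((h * h') * h'') ((n * α h n') * α (h * h') n'')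
        ((n * α h n') * α h (α h' n'')) :=
      E.mul_left _ (E.mul_right h'' (hα.c4 h h' n''))
    have e2 : E.r (h * (h' * h'')) (α h (n' * α h' n'')) (α h n' * α h (α h' n'')) :=
      E.mul_right (h' * h'') (hα.c3 h n' (α h' n''))
    have e3 : E.r ((h * h') * h'') (n * α h (n' * α h' n''))
        (n * (α h n' * α h (α h' n''))) := by
      rw [mul_assoc h h' h'']
      exact E.mul_left n e2
    refine (E.iseqv _).trans e1 ?_
    rw [mul_assoc n (α h n') (α h (α h' n''))]
    exact (E.iseqv _).symm e3
  · rintro ⟨h, a⟩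
    induction a using Quotient.ind with | _ n => ?_
    show wmk E (1 * h) (1 * α 1 n) = wmk E h n
    refine wmk_eq E (one_mul h) ?_
    have : E.r 1 (1 * α 1 n) n := by simpa using hα.c6 n
    simpa using E.mul_right h this
  · rintro ⟨h, a⟩
    induction a using Quotient.ind with | _ n => ?_
    show wmk E (h * 1) (n * α h 1) = wmk E h n
    refine wmk_eq E (mul_one h) ?_
    have : E.r h (n * α h 1) n := by simpa using E.mul_left n (hα.c5 h)
    simpa using E.mul_right 1 this
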